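/- Let (φ_t) be a non-elliptic semigroup in the unit disc 𝔻 with Denjoy-Wolff point 1, and write C(φ_t(0)) = ρ_t e^{iθ_t} with ρ_t > 0, θ_t ∈ (−π/2, π/2), where C is the Cayley transform. Fix θ ∈ (0, π/2). Then there exists a constant Cθ > 0, depending only on θ, such that for every t ≥ 1 with |θ_t| ≤ θ and every s ≥ t, ω(ρ_s e^{iθ_s}, Θ_t, ℍ) ≥ Cθ, where Θ_t := {iy : y ∈ ℝ, |y| ≥ ρ_t}. -/

import Mathlib

open Complex Filter Topology Set MeasureTheory

noncomputable section

/-- The unit disc in the complex plane. -/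
def unitDisc : Set ℂ := {z : ℂ | ‖z‖ < 1}

/-- The inverse hyperbolic tangent: `arctanh x = (1/2)·log((1+x)/(1−x))`. -/
def arctanh (x : ℝ) : ℝ := (1 / 2) * Real.log ((1 + x) / (1 - x))

/-- The hyperbolic distance on the unit disc:
`k_𝔻(z,w) = arctanh |(z−w)/(1−conj(z)·w)|`. -/
def kD (z w : ℂ) : ℝ :=
  arctanh (‖(z - w) / (1 - (starRingEnd ℂ) z * w)‖)

/-- `φ` is a continuous one-parameter semigroup of holomorphic self-maps of the unit disc. -/
structure IsDiscSemigroup (φ : ℝ → ℂ → ℂ) : Prop where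
  mapsTo : ∀ t : ℝ, 0 ≤ t → Set.MapsTo (φ t) unitDisc unitDisc
  holo : ∀ t : ℝ, 0 ≤ t → DifferentiableOn ℂ (φ t) unitDisc
  id0 : ∀ z ∈ unitDisc, φ 0 z = z
  comp : ∀ s t : ℝ, 0 ≤ s → 0 ≤ t → ∀ z ∈ unitDisc, φ (t + s) z = φ t (φ s z)
  cont : ContinuousOn (fun p : ℝ × ℂ => φ p.1 p.2) (Set.Ici 0 ×ˢ unitDisc)

/-- A semigroup in the disc is non-elliptic if it has no fixed point in the disc
for positive times. -/
structure IsNonElliptic (φ : ℝ → ℂ → ℂ) extends IsDiscSemigroup φ : Prop where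
  noFixedPoint : ∀ t : ℝ, 0 < t → ∀ z ∈ unitDisc, φ t z ≠ z

/-- `τ` is the Denjoy-Wolff point of the semigroup `φ`: a boundary point to which
all orbits converge. -/
def IsDenjoyWolff (φ : ℝ → ℂ → ℂ) (τ : ℂ) : Prop :=
  ‖τ‖ = 1 ∧ ∀ z ∈ unitDisc, Tendsto (fun t => φ t z) atTop (𝓝 τ)

/-- `h` is a Koenigs function of the semigroup `φ`: univalent on the disc with
`h(φ_t(z)) = h(z) + it`. -/
def IsKoenigs (φ : ℝ → ℂ → ℂ) (h : ℂ → ℂ) : Prop :=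
  DifferentiableOn ℂ h unitDisc ∧ Set.InjOn h unitDisc ∧
    ∀ t : ℝ, 0 ≤ t → ∀ z ∈ unitDisc, h (φ t z) = h z + Complex.I * t

/-- `p` is the hyperbolic orthogonal projection onto the geodesic `(−1,1)·τ`:
for every `z` in the disc, `p z` lies on the geodesic and minimizes the hyperbolic
distance from `z` to the geodesic. -/
def IsOrthProjection (τ : ℂ) (p : ℂ → ℂ) : Prop :=
  ∀ z ∈ unitDisc,
    (∃ r : ℝ, r ∈ Set.Ioo (-1 : ℝ) 1 ∧ p z = (r : ℂ) * τ) ∧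
    ∀ r : ℝ, r ∈ Set.Ioo (-1 : ℝ) 1 → kD z (p z) ≤ kD z ((r : ℂ) * τ)

/-- The total speed `v(t) = k_𝔻(0, φ_t(0))` of a semigroup. -/
def totalSpeed (φ : ℝ → ℂ → ℂ) (t : ℝ) : ℝ := kD 0 (φ t 0)

/-- The orthogonal speed `v^o(t) = k_𝔻(0, π(φ_t(0)))` of a semigroup, relative to the
orthogonal projection `p` onto the geodesic `(−1,1)·τ`. -/
def orthSpeed (φ : ℝ → ℂ → ℂ) (p : ℂ → ℂ) (t : ℝ) : ℝ := kD 0 (p (φ t 0))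

/-- `δ⁺(t)`: the truncated distance from `z₀ + it` to the part of the complement of `Ω`
lying to the right of the vertical line through `z₀`. -/
def deltaPlus (Ω : Set ℂ) (z₀ : ℂ) (t : ℝ) : ℝ :=
  min t (sInf {d : ℝ | ∃ w : ℂ, w ∉ Ω ∧ z₀.re ≤ w.re ∧ d = ‖w - (z₀ + Complex.I * t)‖})

/-- `δ⁻(t)`: the truncated distance from `z₀ + it` to the part of the complement of `Ω`
lying to the left of the vertical line through `z₀`. -/
def deltaMinus (Ω : Set ℂ) (z₀ : ℂ) (t : ℝ) : ℝ :=
  min t (sInf {d : ℝ | ∃ w : ℂ, w ∉ Ω ∧ w.re ≤ z₀.re ∧ d = ‖w - (z₀ + Complex.I * t)‖})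

/-- `Ω` is quasi-symmetric with respect to vertical axes. -/
def QuasiSymmetric (Ω : Set ℂ) : Prop :=
  ∃ z₀ ∈ Ω, ∃ K : ℝ, 0 < K ∧ ∀ t : ℝ, 0 ≤ t →
    K⁻¹ * deltaMinus Ω z₀ t ≤ deltaPlus Ω z₀ t ∧ deltaPlus Ω z₀ t ≤ K * deltaMinus Ω z₀ t

/-- `Ω` is starlike with respect to `w₀`: every segment from `w₀` to a point of `Ω`
is contained in `Ω`. -/
def StarlikeWrt (Ω : Set ℂ) (w₀ : ℂ) : Prop :=
  ∀ w ∈ Ω, ∀ s : ℝ, s ∈ Set.Icc (0 : ℝ) 1 → (1 - (s : ℂ)) * w₀ + (s : ℂ) * w ∈ Ω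

/-- The orbit of `0` converges non-tangentially to `τ`:
`limsup_{t→+∞} |τ − φ_t(0)|/(1 − |φ_t(0)|) < +∞`. -/
def ConvergesNonTangentially (φ : ℝ → ℂ → ℂ) (τ : ℂ) : Prop :=
  Filter.limsup (fun t : ℝ =>
    ((‖τ - φ t 0‖ / (1 - ‖φ t 0‖) : ℝ) : EReal)) atTop < ⊤

/-- `f` is eventually non-decreasing. -/
def EventuallyNondecreasing (f : ℝ → ℝ) : Prop :=
  ∃ T : ℝ, ∀ s t : ℝ, T ≤ s → s ≤ t → f s ≤ f t

/-- The Cayley transform from the unit disc to the right half-plane. -/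
def cayley (z : ℂ) : ℂ := (1 + z) / (1 - z)

/-- The inverse Cayley transform, from the right half-plane to the unit disc. -/
def cayleyInv (w : ℂ) : ℂ := (w - 1) / (w + 1)

/-- `Θ_ρ := {iy : y ∈ ℝ, |y| ≥ ρ}`, a subset of the imaginary axis. -/
def Theta (ρ : ℝ) : Set ℂ := {z : ℂ | ∃ y : ℝ, z = Complex.I * (y : ℂ) ∧ ρ ≤ |y|}

/-- `Γ*_t := {iy : |y| ≥ inf_{u ≥ t} ρ_u}`. -/
def GammaStar (ρ : ℝ → ℝ) (t : ℝ) : Set ℂ :=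
  {z : ℂ | ∃ y : ℝ, z = Complex.I * (y : ℂ) ∧ sInf {r : ℝ | ∃ u : ℝ, t ≤ u ∧ r = ρ u} ≤ |y|}

/-- The harmonic measure at `w` (a point of the right half-plane) of a Borel subset `E`
of the imaginary axis, with respect to the right half-plane:
`ω(w,E,ℍ) = (1/π) ∫_{{s : is ∈ E}} Re w/((Re w)² + (Im w − s)²) ds`. -/
def omegaH (w : ℂ) (E : Set ℂ) : ℝ :=
  (1 / Real.pi) *
    ∫ s in {s : ℝ | Complex.I * (s : ℂ) ∈ E}, w.re / (w.re ^ 2 + (w.im - s) ^ 2)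

/-- The Euclidean arclength of the closed arc of the unit circle containing `1`
with endpoints `a` and `conj a` (where `Im a > 0`), namely `2·arg a`. -/
def arcLength (a : ℂ) : ℝ := 2 * Complex.arg a

/-- The harmonic measure at `0` with respect to the unit disc of the closed arc of the
unit circle containing `1` with endpoints `a` and `conj a`: `ℓ(A)/(2π)`. -/
def omegaDiscZero (a : ℂ) : ℝ := arcLength a / (2 * Real.pi)

/-- `Π_α := {z ∈ ℂ : Im z > |Re z|^α}`. -/
def PiDom (α : ℝ) : Set ℂ := {z : ℂ | |z.re| ^ α < z.im}

/-- `W(θ) := {z ≠ 0 : arg z ∈ (π/2 − θ, π/2)}`. -/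
def Wsector (θ : ℝ) : Set ℂ :=
  {z : ℂ | z ≠ 0 ∧ Complex.arg z ∈ Set.Ioo (Real.pi / 2 - θ) (Real.pi / 2)}

/-- `Ξ(α,θ) := ({Re z ≤ 0} ∩ Π_α) ∪ W(θ)`. -/
def Xi (α θ : ℝ) : Set ℂ := ({z : ℂ | z.re ≤ 0} ∩ PiDom α) ∪ Wsector θ

-- ===== auxiliary lemmas =====
lemma unitDisc_eq_ball : unitDisc = Metric.ball (0:ℂ) 1 := by
  ext z; simp [unitDisc, Metric.mem_ball, Complex.dist_eq]

lemma normSq_identity (a b : ℂ) :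
    normSq (1 - (starRingEnd ℂ) a * b) - normSq (a - b)
      = (1 - normSq a) * (1 - normSq b) := by
  have h : ∀ z : ℂ, ((normSq z : ℝ) : ℂ) = z * (starRingEnd ℂ) z := by
    intro z; rw [Complex.mul_conj]
  have key : ((normSq (1 - (starRingEnd ℂ) a * b) - normSq (a - b) : ℝ) : ℂ)
      = (((1 - normSq a) * (1 - normSq b) : ℝ) : ℂ) := by
    push_cast
    rw [h, h, h, h]
    simp only [map_sub, map_mul, map_one, Complex.conj_conj]
    ring
  exact_mod_cast key

def mob (a z : ℂ) : ℂ := (a - z) / (1 - (starRingEnd ℂ) a * z)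

lemma mob_denom_ne (a z : ℂ) (ha : ‖a‖ < 1) (hz : ‖z‖ < 1) :
    (1 : ℂ) - (starRingEnd ℂ) a * z ≠ 0 := by
  intro h
  have h1 : ‖(starRingEnd ℂ) a * z‖ < 1 := by
    rw [norm_mul, Complex.norm_conj]
    calc ‖a‖ * ‖z‖ ≤ ‖a‖ * 1 :=
          mul_le_mul_of_nonneg_left hz.le (norm_nonneg a)
      _ < 1 := by simpa using ha
  have h2 : (starRingEnd ℂ) a * z = 1 := by linear_combination -h
  rw [h2] at h1; simp at h1

lemma mob_mem (a z : ℂ) (ha : ‖a‖ < 1) (hz : ‖z‖ < 1) :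
    ‖mob a z‖ < 1 := by
  have hd := mob_denom_ne a z ha hz
  have hna : normSq a < 1 := by rw [← Complex.sq_norm]; nlinarith [norm_nonneg a]
  have hnz : normSq z < 1 := by rw [← Complex.sq_norm]; nlinarith [norm_nonneg z]
  rw [mob, norm_div, div_lt_one (norm_pos_iff.mpr hd)]
  have hlt : normSq (a - z) < normSq (1 - (starRingEnd ℂ) a * z) := by
    nlinarith [normSq_identity a z, mul_pos (sub_pos.2 hna) (sub_pos.2 hnz)]
  have := Real.sqrt_lt_sqrt (Complex.normSq_nonneg _) hlt
  simpa [Complex.norm_def] using this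

lemma mob_zero (a : ℂ) : mob a 0 = a := by simp [mob]

lemma mob_self (a : ℂ) : mob a a = 0 := by simp [mob]

lemma mob_mob (a z : ℂ) (ha : ‖a‖ < 1) (hz : ‖z‖ < 1) :
    mob a (mob a z) = z := by
  have hd := mob_denom_ne a z ha hz
  have hca : (1:ℂ) - (starRingEnd ℂ) a * a ≠ 0 := by
    intro h
    have h2 : (starRingEnd ℂ) a * a = 1 := by linear_combination -h
    have h3 := congrArg (‖·‖) h2
    rw [norm_mul, Complex.norm_conj] at h3
    simp at h3
    nlinarith [norm_nonneg a]
  have e1 : (1:ℂ) - (starRingEnd ℂ) a * mob a z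
      = (1 - (starRingEnd ℂ) a * a) / (1 - (starRingEnd ℂ) a * z) := by
    rw [mob]; field_simp; ring
  rw [mob, e1, mob, div_eq_iff (div_ne_zero hca hd)]
  rw [mul_div_assoc', eq_div_iff hd, sub_mul, div_mul_cancel₀ _ hd]
  ring

lemma mob_differentiableOn (a : ℂ) (ha : ‖a‖ < 1) :
    DifferentiableOn ℂ (mob a) (Metric.ball 0 1) := by
  apply DifferentiableOn.div
  · exact ((differentiable_const a).sub differentiable_id).differentiableOn
  · exact ((differentiable_const (1:ℂ)).sub ((differentiable_const _).mul differentiable_id)).differentiableOn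
  · intro z hz
    exact mob_denom_ne a z ha (by simpa [Complex.dist_eq] using hz)

/-- Schwarz–Pick lemma. -/
lemma schwarz_pick {f : ℂ → ℂ} (hf : DifferentiableOn ℂ f unitDisc)
    (hm : MapsTo f unitDisc unitDisc) {z w : ℂ} (hz : z ∈ unitDisc) (hw : w ∈ unitDisc) :
    ‖mob (f w) (f z)‖ ≤ ‖mob w z‖ := by
  rw [unitDisc_eq_ball] at hf hm hz hw
  have hzb : ‖z‖ < 1 := by simpa [Complex.dist_eq] using hz
  have hwb : ‖w‖ < 1 := by simpa [Complex.dist_eq] using hw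
  have hfw : ‖f w‖ < 1 := by
    have := hm hw; simpa [Complex.dist_eq] using this
  set g : ℂ → ℂ := fun u => mob (f w) (f (mob w u)) with hg
  have hmemball : ∀ u : ℂ, u ∈ Metric.ball (0:ℂ) 1 → ‖u‖ < 1 := by
    intro u hu; simpa [Complex.dist_eq] using hu
  have hgd : DifferentiableOn ℂ g (Metric.ball 0 1) := by
    apply DifferentiableOn.comp (mob_differentiableOn (f w) hfw)
    · apply DifferentiableOn.comp hf
      · exact mob_differentiableOn w hwb
      · intro u hu
        simpa [Complex.dist_eq] using mob_mem w u hwb (hmemball u hu)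
    · intro u hu
      have h1 : ‖mob w u‖ < 1 := mob_mem w u hwb (hmemball u hu)
      have := hm (by simpa [Complex.dist_eq] using h1 : mob w u ∈ Metric.ball (0:ℂ) 1)
      simpa [Complex.dist_eq] using this
  have hgm : MapsTo g (Metric.ball 0 1) (Metric.ball 0 1) := by
    intro u hu
    have h1 : ‖mob w u‖ < 1 := mob_mem w u hwb (hmemball u hu)
    have h2 := hm (by simpa [Complex.dist_eq] using h1 : mob w u ∈ Metric.ball (0:ℂ) 1)
    have h3 : ‖f (mob w u)‖ < 1 := by simpa [Complex.dist_eq] using h2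
    have := mob_mem (f w) _ hfw h3
    simpa [Complex.dist_eq, g] using this
  have hg0 : g 0 = 0 := by
    simp only [g, mob_zero]
    exact mob_self (f w)
  have key := Complex.norm_le_norm_of_mapsTo_ball hgd (hgm.mono_right Metric.ball_subset_closedBall) hg0
      (z := mob w z) (mob_mem w z hwb hzb)
  have hrw : g (mob w z) = mob (f w) (f z) := by
    simp only [g, mob_mob w z hwb hzb]
  rwa [hrw] at key

lemma zero_mem_unitDisc : (0 : ℂ) ∈ unitDisc := by
  simp only [unitDisc, Set.mem_setOf_eq, map_zero]; norm_num

/-- `1 - |mob a z|²` formula. -/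
lemma one_sub_normSq_mob (a z : ℂ) (ha : ‖a‖ < 1) (hz : ‖z‖ < 1) :
    1 - normSq (mob a z)
      = (1 - normSq a) * (1 - normSq z) / normSq (1 - (starRingEnd ℂ) a * z) := by
  have hd := mob_denom_ne a z ha hz
  have hdpos : 0 < normSq (1 - (starRingEnd ℂ) a * z) := normSq_pos.2 hd
  have h1 : normSq (mob a z) = normSq (a - z) / normSq (1 - (starRingEnd ℂ) a * z) := by
    rw [mob, normSq_div]
  rw [h1, eq_div_iff hdpos.ne', sub_mul, div_mul_cancel₀ _ hdpos.ne']
  linarith [normSq_identity a z]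

section julia
variable {φ : ℝ → ℂ → ℂ}

lemma orbit_mem (hsg : IsDiscSemigroup φ) {u : ℝ} (hu : 0 ≤ u) : φ u 0 ∈ unitDisc :=
  hsg.mapsTo u hu zero_mem_unitDisc

lemma orbit_abs_lt (hsg : IsDiscSemigroup φ) {u : ℝ} (hu : 0 ≤ u) :
    ‖φ u 0‖ < 1 := orbit_mem hsg hu

lemma exists_ratio_le (hsg : IsDiscSemigroup φ) {h : ℝ} (hh : 0 ≤ h)
    {ε : ℝ} (hε : 0 < ε) (u₀ : ℝ) (hu₀ : 0 ≤ u₀) :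
    ∃ u : ℝ, u₀ ≤ u ∧
      1 - ‖φ (u + h) 0‖ ≤ (1 + ε) * (1 - ‖φ u 0‖) := by
  by_contra hcon
  push_neg at hcon
  have key : ∀ n : ℕ, (1 + ε) ^ n * (1 - ‖φ u₀ 0‖) ≤
      1 - ‖φ (u₀ + n * h) 0‖ := by
    intro n
    induction n with
    | zero => simp
    | succ n ih =>
      have hnh : (0:ℝ) ≤ (n:ℝ) * h := by positivity
      have h1 := hcon (u₀ + n * h) (by linarith)
      have h2 : (0:ℝ) < 1 + ε := by linarith
      have h3 : (1 + ε) * ((1 + ε) ^ n * (1 - ‖φ u₀ 0‖))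
          ≤ (1 + ε) * (1 - ‖φ (u₀ + n * h) 0‖) :=
        mul_le_mul_of_nonneg_left ih h2.le
      have h4 : u₀ + n * h + h = u₀ + (n + 1 : ℕ) * h := by push_cast; ring
      calc (1 + ε) ^ (n+1) * (1 - ‖φ u₀ 0‖)
          = (1 + ε) * ((1 + ε) ^ n * (1 - ‖φ u₀ 0‖)) := by ring
        _ ≤ (1 + ε) * (1 - ‖φ (u₀ + n * h) 0‖) := h3
        _ ≤ 1 - ‖φ (u₀ + n * h + h) 0‖ := (h1).le
        _ = 1 - ‖φ (u₀ + (n + 1 : ℕ) * h) 0‖ := by rw [h4]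
  have hpos : 0 < 1 - ‖φ u₀ 0‖ := by
    linarith [orbit_abs_lt hsg hu₀]
  obtain ⟨n, hn⟩ := pow_unbounded_of_one_lt ((1 - ‖φ u₀ 0‖)⁻¹)
    (by linarith : (1:ℝ) < 1 + ε)
  have h5 := key n
  have h6 : 1 < (1 + ε) ^ n * (1 - ‖φ u₀ 0‖) := by
    have h8 := mul_lt_mul_of_pos_right hn hpos
    rwa [inv_mul_cancel₀ hpos.ne'] at h8
  have h7 : 1 - ‖φ (u₀ + n * h) 0‖ ≤ 1 := by
    linarith [norm_nonneg (φ (u₀ + n * h) 0)]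
  linarith

/-- Julia-type monotonicity: `Re C(φ_t(0))`, written via `normSq`, is nondecreasing. -/
lemma julia_mono (hsg : IsDiscSemigroup φ)
    (hdw : Tendsto (fun u : ℝ => φ u 0) atTop (𝓝 1))
    {t s : ℝ} (ht : 0 ≤ t) (hts : t ≤ s) :
    (1 - normSq (φ t 0)) / normSq (1 - φ t 0)
      ≤ (1 - normSq (φ s 0)) / normSq (1 - φ s 0) := by
  have hs : 0 ≤ s := le_trans ht hts
  set h : ℝ := s - t with hdef
  have hh : 0 ≤ h := by simp [hdef]; linarith
  -- choose good times u k
  have hchoice : ∀ k : ℕ, ∃ u : ℝ, (k : ℝ) ≤ u ∧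
      1 - ‖φ (u + h) 0‖ ≤ (1 + 1/((k:ℝ)+1)) * (1 - ‖φ u 0‖) := by
    intro k
    exact exists_ratio_le hsg hh (by positivity) (k : ℝ) (Nat.cast_nonneg k)
  choose u hu1 hu2 using hchoice
  have hu0 : ∀ k, (0:ℝ) ≤ u k := fun k => le_trans (Nat.cast_nonneg k) (hu1 k)
  have hutop : Tendsto u atTop atTop :=
    tendsto_atTop_mono hu1 tendsto_natCast_atTop_atTop
  set b : ℕ → ℂ := fun k => φ (u k) 0 with hb
  set b' : ℕ → ℂ := fun k => φ (u k + h) 0 with hb'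
  have hbtend : Tendsto b atTop (𝓝 1) := hdw.comp hutop
  have hb'tend : Tendsto b' atTop (𝓝 1) :=
    hdw.comp (tendsto_atTop_add_const_right atTop h hutop)
  have hbd : ∀ k, ‖b k‖ < 1 := fun k => orbit_abs_lt hsg (hu0 k)
  have hb'd : ∀ k, ‖b' k‖ < 1 := fun k => orbit_abs_lt hsg (by linarith [hu0 k])
  have hzt : φ t 0 ∈ unitDisc := orbit_mem hsg ht
  have hzs : φ s 0 ∈ unitDisc := orbit_mem hsg hs
  have habs_t : ‖φ t 0‖ < 1 := hzt
  have habs_s : ‖φ s 0‖ < 1 := hzs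
  -- Schwarz-Pick along the orbit
  have hSP : ∀ k : ℕ,
      (1 - normSq (b k)) * (1 - normSq (φ t 0)) / normSq (1 - (starRingEnd ℂ) (b k) * φ t 0)
      ≤ (1 - normSq (b' k)) * (1 - normSq (φ s 0)) / normSq (1 - (starRingEnd ℂ) (b' k) * φ s 0) := by
    intro k
    have hf := hsg.holo h hh
    have hm := hsg.mapsTo h hh
    have hc1 : φ h (φ t 0) = φ s 0 := by
      rw [← hsg.comp t h ht hh 0 zero_mem_unitDisc]
      norm_num [hdef]
    have hc2 : φ h (b k) = b' k := by
      rw [hb, hb', ← hsg.comp (u k) h (hu0 k) hh 0 zero_mem_unitDisc, add_comm]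
    have hsp := schwarz_pick hf hm (z := φ t 0) (w := b k) hzt (orbit_mem hsg (hu0 k))
    rw [hc1, hc2] at hsp
    have h1 : normSq (mob (b' k) (φ s 0)) ≤ normSq (mob (b k) (φ t 0)) := by
      rw [← Complex.sq_norm, ← Complex.sq_norm]
      exact pow_le_pow_left₀ (norm_nonneg _) hsp 2
    have e1 := one_sub_normSq_mob (b k) (φ t 0) (hbd k) habs_t
    have e2 := one_sub_normSq_mob (b' k) (φ s 0) (hb'd k) habs_s
    have : 1 - normSq (mob (b k) (φ t 0)) ≤ 1 - normSq (mob (b' k) (φ s 0)) := by linarith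
    rw [e1, e2] at this
    exact this
  -- limit argument
  have hid : ∀ w : ℂ, (1 + ‖w‖) * (1 - ‖w‖) = 1 - normSq w := by
    intro w; rw [← Complex.sq_norm]; ring
  have hns_t : normSq (φ t 0) < 1 := by rw [← Complex.sq_norm]; nlinarith [norm_nonneg (φ t 0)]
  have hns_s : normSq (φ s 0) < 1 := by rw [← Complex.sq_norm]; nlinarith [norm_nonneg (φ s 0)]
  set L : ℕ → ℝ := fun k =>
    (1 - normSq (φ t 0)) / normSq (1 - (starRingEnd ℂ) (b k) * φ t 0)
      * (1 + ‖b k‖) with hL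
  set R : ℕ → ℝ := fun k =>
    (1 - normSq (φ s 0)) / normSq (1 - (starRingEnd ℂ) (b' k) * φ s 0)
      * ((1 + 1/((k:ℝ)+1)) * (1 + ‖b' k‖)) with hR
  have hLR : ∀ k, L k ≤ R k := by
    intro k
    have hbpos : 0 < 1 - ‖b k‖ := by linarith [hbd k]
    rw [← mul_le_mul_iff_left₀ hbpos]
    have hDs : 0 < normSq (1 - (starRingEnd ℂ) (b' k) * φ s 0) :=
      normSq_pos.2 (mob_denom_ne (b' k) (φ s 0) (hb'd k) habs_s)
    have e3 : L k * (1 - ‖b k‖)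
        = (1 - normSq (b k)) * (1 - normSq (φ t 0))
          / normSq (1 - (starRingEnd ℂ) (b k) * φ t 0) := by
      simp only [hL]; rw [← hid (b k)]; ring
    have e4 : (1 - normSq (b' k)) * (1 - normSq (φ s 0))
          / normSq (1 - (starRingEnd ℂ) (b' k) * φ s 0)
        = ((1 - normSq (φ s 0)) / normSq (1 - (starRingEnd ℂ) (b' k) * φ s 0)
            * (1 + ‖b' k‖)) * (1 - ‖b' k‖) := by
      rw [← hid (b' k)]; ring
    have hfac : 0 ≤ (1 - normSq (φ s 0)) / normSq (1 - (starRingEnd ℂ) (b' k) * φ s 0)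
        * (1 + ‖b' k‖) := by
      apply mul_nonneg (div_nonneg (by linarith) hDs.le)
      linarith [norm_nonneg (b' k)]
    have e5 : ((1 - normSq (φ s 0)) / normSq (1 - (starRingEnd ℂ) (b' k) * φ s 0)
            * (1 + ‖b' k‖)) * (1 - ‖b' k‖)
        ≤ ((1 - normSq (φ s 0)) / normSq (1 - (starRingEnd ℂ) (b' k) * φ s 0)
            * (1 + ‖b' k‖)) * ((1 + 1/((k:ℝ)+1)) * (1 - ‖b k‖)) :=
      mul_le_mul_of_nonneg_left (hu2 k) hfac
    calc L k * (1 - ‖b k‖)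
        = (1 - normSq (b k)) * (1 - normSq (φ t 0))
          / normSq (1 - (starRingEnd ℂ) (b k) * φ t 0) := e3
      _ ≤ (1 - normSq (b' k)) * (1 - normSq (φ s 0))
          / normSq (1 - (starRingEnd ℂ) (b' k) * φ s 0) := hSP k
      _ ≤ ((1 - normSq (φ s 0)) / normSq (1 - (starRingEnd ℂ) (b' k) * φ s 0)
            * (1 + ‖b' k‖)) * ((1 + 1/((k:ℝ)+1)) * (1 - ‖b k‖)) := by
          rw [e4]; exact e5
      _ = R k * (1 - ‖b k‖) := by simp only [hR]; ring
  -- limits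
  have hne_t : φ t 0 ≠ 1 := by intro hzeq; rw [hzeq] at habs_t; simp at habs_t
  have hne_s : φ s 0 ≠ 1 := by intro hzeq; rw [hzeq] at habs_s; simp at habs_s
  have hden_t : normSq (1 - φ t 0) ≠ 0 :=
    (normSq_pos.2 (sub_ne_zero.2 (Ne.symm hne_t))).ne'
  have hden_s : normSq (1 - φ s 0) ≠ 0 :=
    (normSq_pos.2 (sub_ne_zero.2 (Ne.symm hne_s))).ne'
  have hcont1 : Tendsto (fun k => normSq (1 - (starRingEnd ℂ) (b k) * φ t 0)) atTop
      (𝓝 (normSq (1 - φ t 0))) := by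
    have hc : Continuous fun w : ℂ => normSq (1 - (starRingEnd ℂ) w * φ t 0) :=
      Complex.continuous_normSq.comp
        (continuous_const.sub ((Complex.continuous_conj).mul continuous_const))
    have h9 := (hc.tendsto 1).comp hbtend
    simpa [Function.comp_def] using h9
  have hcont2 : Tendsto (fun k => normSq (1 - (starRingEnd ℂ) (b' k) * φ s 0)) atTop
      (𝓝 (normSq (1 - φ s 0))) := by
    have hc : Continuous fun w : ℂ => normSq (1 - (starRingEnd ℂ) w * φ s 0) :=
      Complex.continuous_normSq.comp
        (continuous_const.sub ((Complex.continuous_conj).mul continuous_const))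
    have h9 := (hc.tendsto 1).comp hb'tend
    simpa [Function.comp_def] using h9
  have habst : Tendsto (fun k => ‖b k‖) atTop (𝓝 1) := by
    have h9 := (continuous_norm.tendsto 1).comp hbtend
    simpa [Function.comp_def] using h9
  have habst' : Tendsto (fun k => ‖b' k‖) atTop (𝓝 1) := by
    have h9 := (continuous_norm.tendsto 1).comp hb'tend
    simpa [Function.comp_def] using h9
  have heps : Tendsto (fun k : ℕ => 1 + 1/((k:ℝ)+1)) atTop (𝓝 1) := by
    have h9 := tendsto_one_div_add_atTop_nhds_zero_nat (𝕜 := ℝ)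
    have h10 := h9.const_add (1:ℝ)
    simpa using h10
  have TL : Tendsto L atTop
      (𝓝 ((1 - normSq (φ t 0)) / normSq (1 - φ t 0) * (1 + 1))) :=
    ((tendsto_const_nhds.div hcont1 hden_t).mul (tendsto_const_nhds.add habst))
  have TR : Tendsto R atTop
      (𝓝 ((1 - normSq (φ s 0)) / normSq (1 - φ s 0) * (1 * (1 + 1)))) :=
    ((tendsto_const_nhds.div hcont2 hden_s).mul (heps.mul (tendsto_const_nhds.add habst')))
  have hfin := le_of_tendsto_of_tendsto' TL TR hLR
  nlinarith [hfin]
end julia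

lemma integrable_pois (x y : ℝ) (hx : 0 < x) :
    Integrable (fun s : ℝ => x / (x ^ 2 + (y - s) ^ 2)) := by
  have h1 : Integrable (fun u : ℝ => (1 + u ^ 2)⁻¹) := integrable_inv_one_add_sq
  have h2 : Integrable (fun u : ℝ => (1 + (u / x) ^ 2)⁻¹) := h1.comp_div hx.ne'
  have h3 : Integrable (fun s : ℝ => (1 + ((s - y) / x) ^ 2)⁻¹) := h2.comp_sub_right y
  have h4 := h3.const_mul (1 / x)
  refine h4.congr (Filter.Eventually.of_forall fun s => ?_)
  have hd : (0:ℝ) < x ^ 2 + (y - s) ^ 2 := by positivity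
  field_simp
  ring

lemma omega_lower (x y ρ cθ : ℝ) (hx : 0 < x) (hρ : 0 < ρ) (hcθ : 0 < cθ)
    (hxρ : ρ * cθ ≤ x) :
    1 / (1 + (1 + 1 / cθ) ^ 2) ≤ ∫ s in {s : ℝ | ρ ≤ |s|}, x / (x ^ 2 + (y - s) ^ 2) := by
  set f : ℝ → ℝ := fun s => x / (x ^ 2 + (y - s) ^ 2) with hf
  have hfnn : ∀ s, 0 ≤ f s := fun s => by positivity
  have hfi : Integrable f := integrable_pois x y hx
  set a : ℝ := max ρ |y| with ha
  set I : Set ℝ := if 0 ≤ y then Icc a (a + x) else Icc (-(a + x)) (-a) with hI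
  have haρ : ρ ≤ a := le_max_left _ _
  have hay : |y| ≤ a := le_max_right _ _
  have haρ2 : a ≤ ρ + |y| := max_le (by linarith [abs_nonneg y]) (by linarith)
  -- every point of I satisfies ρ ≤ |s| and |y - s| ≤ ρ + x
  have hIprop : ∀ s ∈ I, ρ ≤ |s| ∧ (y - s) ^ 2 ≤ (ρ + x) ^ 2 := by
    intro s hs
    rw [hI] at hs
    by_cases hy : 0 ≤ y
    · rw [if_pos hy] at hs
      obtain ⟨h1, h2⟩ := hs
      have hya : y ≤ a := le_trans (le_abs_self y) hay
      constructor
      · rw [_root_.abs_of_nonneg (by linarith)]; linarith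
      · have : |y - s| ≤ ρ + x := by
          rw [abs_sub_comm, _root_.abs_of_nonneg (by linarith)]
          have : a - y ≤ ρ := by rw [_root_.abs_of_nonneg hy] at haρ2; linarith
          linarith
        calc (y - s)^2 = |y - s|^2 := (_root_.sq_abs _).symm
          _ ≤ (ρ + x)^2 := by nlinarith [abs_nonneg (y - s)]
    · rw [if_neg hy] at hs
      obtain ⟨h1, h2⟩ := hs
      push_neg at hy
      have hya : -a ≤ y := by
        have : -y ≤ a := le_trans (neg_le_abs y) hay
        linarith
      constructor
      · rw [_root_.abs_of_nonpos (by linarith : s ≤ 0)]; linarith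
      · have : |y - s| ≤ ρ + x := by
          rw [_root_.abs_of_nonneg (by linarith)]
          have : a + y ≤ ρ := by rw [_root_.abs_of_neg hy] at haρ2; linarith
          linarith
        calc (y - s)^2 = |y - s|^2 := (_root_.sq_abs _).symm
          _ ≤ (ρ + x)^2 := by nlinarith [abs_nonneg (y - s)]
  have hIsub : I ⊆ {s : ℝ | ρ ≤ |s|} := fun s hs => (hIprop s hs).1
  have hIm : MeasurableSet I := by
    rw [hI]; split <;> exact measurableSet_Icc
  have hvol : (volume I).toReal = x := by
    rw [hI]
    by_cases hy : 0 ≤ y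
    · rw [if_pos hy, Real.volume_Icc, show a + x - a = x by ring]
      exact ENNReal.toReal_ofReal hx.le
    · rw [if_neg hy, Real.volume_Icc, show -a - -(a + x) = x by ring]
      exact ENNReal.toReal_ofReal hx.le
  set c : ℝ := x / (x ^ 2 + (ρ + x) ^ 2) with hc
  have hstep1 : c * x ≤ ∫ s in I, f s := by
    have h1 : ∫ _ in I, c ≤ ∫ s in I, f s := by
      apply setIntegral_mono_on
      · exact (integrableOn_const_iff enorm_ne_top).2 (Or.inr (by rw [hI]; split <;> exact measure_Icc_lt_top))
      · exact hfi.integrableOn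
      · exact hIm
      · intro s hs
        have h2 := (hIprop s hs).2
        rw [hf, hc]
        rw [div_le_div_iff₀ (by positivity) (by positivity)]
        nlinarith [sq_nonneg x]
    have h0 : ∫ _ in I, (c : ℝ) = c * x := by
      rw [setIntegral_const, measureReal_def, hvol, smul_eq_mul, mul_comm]
    linarith
  have hstep2 : ∫ s in I, f s ≤ ∫ s in {s : ℝ | ρ ≤ |s|}, f s :=
    setIntegral_mono_set hfi.integrableOn
      (Filter.Eventually.of_forall fun s => hfnn s) (HasSubset.Subset.eventuallyLE hIsub)
  have harith : 1 / (1 + (1 + 1 / cθ) ^ 2) ≤ c * x := by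
    rw [hc]
    have hρx : ρ ≤ x / cθ := by rw [le_div_iff₀ hcθ]; linarith
    have h6 : (ρ + x) * (ρ + x) ≤ (x / cθ + x) * (x / cθ + x) :=
      mul_self_le_mul_self (by positivity) (by linarith)
    have key : (ρ + x) ^ 2 ≤ x ^ 2 * (1 + 1 / cθ) ^ 2 := by
      have key2 : (x / cθ + x) ^ 2 = x ^ 2 * (1 + 1 / cθ) ^ 2 := by ring
      rw [← key2, sq, sq]; exact h6
    rw [div_mul_eq_mul_div, div_le_div_iff₀ (by positivity) (by positivity)]
    nlinarith [key]
  calc 1 / (1 + (1 + 1 / cθ) ^ 2) ≤ c * x := harith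
    _ ≤ ∫ s in I, f s := hstep1
    _ ≤ ∫ s in {s : ℝ | ρ ≤ |s|}, f s := hstep2

lemma cayley_re_eq (z : ℂ) :
    (cayley z).re = (1 - normSq z) / normSq (1 - z) := by
  rw [cayley, Complex.div_re, ← add_div]
  congr 1
  simp [Complex.normSq_apply]
  ring

/-- **Lemma 5.3:** for each `θ ∈ (0,π/2)` there is a constant `C(θ) > 0`, depending only
on `θ`, such that for every non-elliptic semigroup with Denjoy-Wolff point `1`, every
`t ≥ 1` with `|θ_t| ≤ θ` and every `s ≥ t`, `ω(ρ_s e^{iθ_s}, Θ_t, ℍ) ≥ C(θ)`. -/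
theorem omegaH_theta_ge_const_of_nontangential
    (θ : ℝ) (hθ : θ ∈ Set.Ioo (0 : ℝ) (Real.pi / 2)) :
    ∃ Cθ : ℝ, 0 < Cθ ∧
      ∀ (φ : ℝ → ℂ → ℂ) (ρ θf : ℝ → ℝ),
        IsNonElliptic φ → IsDenjoyWolff φ 1 →
        (∀ t : ℝ, 0 ≤ t → 0 < ρ t ∧
          θf t ∈ Set.Ioo (-(Real.pi / 2)) (Real.pi / 2) ∧
          cayley (φ t 0) = (ρ t : ℂ) * Complex.exp (Complex.I * (θf t : ℂ))) →
        ∀ t : ℝ, 1 ≤ t → |θf t| ≤ θ → ∀ s : ℝ, t ≤ s →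
          Cθ ≤ omegaH (cayley (φ s 0)) (Theta (ρ t)) := by
  obtain ⟨hθ0, hθπ⟩ := hθ
  have hcos : 0 < Real.cos θ := Real.cos_pos_of_mem_Ioo ⟨by linarith, hθπ⟩
  refine ⟨(1 / Real.pi) * (1 / (1 + (1 + 1 / Real.cos θ) ^ 2)), by positivity, ?_⟩
  intro φ ρ θf hne hdw hpolar t ht hθt s hts
  have ht0 : (0:ℝ) ≤ t := by linarith
  have hs0 : (0:ℝ) ≤ s := by linarith
  have hsg := hne.toIsDiscSemigroup
  obtain ⟨hρt, hθft, hct⟩ := hpolar t ht0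
  have hdw0 := hdw.2 0 zero_mem_unitDisc
  have hret : (cayley (φ t 0)).re = ρ t * Real.cos (θf t) := by
    rw [hct, show Complex.I * ((θf t : ℝ) : ℂ) = ((θf t : ℝ) : ℂ) * Complex.I by ring,
      Complex.re_ofReal_mul, Complex.exp_ofReal_mul_I_re]
  have hmono := julia_mono hsg hdw0 ht0 hts
  rw [← cayley_re_eq, ← cayley_re_eq] at hmono
  have hcoste : Real.cos θ ≤ Real.cos (θf t) := by
    rw [← Real.cos_abs (θf t)]
    apply Real.cos_le_cos_of_nonneg_of_le_pi (abs_nonneg _) (by linarith [Real.pi_pos]) hθt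
  have hx : ρ t * Real.cos θ ≤ (cayley (φ s 0)).re := by
    calc ρ t * Real.cos θ ≤ ρ t * Real.cos (θf t) := by nlinarith
      _ = (cayley (φ t 0)).re := hret.symm
      _ ≤ _ := hmono
  have hxpos : 0 < (cayley (φ s 0)).re := lt_of_lt_of_le (by positivity) hx
  have hset : {s' : ℝ | Complex.I * (s' : ℂ) ∈ Theta (ρ t)} = {s' : ℝ | ρ t ≤ |s'|} := by
    ext s'
    simp only [Theta, Set.mem_setOf_eq]
    constructor
    · rintro ⟨y, h1, h2⟩
      have h3 : (s' : ℂ) = (y : ℂ) := mul_left_cancel₀ Complex.I_ne_zero h1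
      rw [show s' = y from by exact_mod_cast h3]; exact h2
    · intro h1; exact ⟨s', rfl, h1⟩
  rw [omegaH, hset]
  have hkey := omega_lower ((cayley (φ s 0)).re) ((cayley (φ s 0)).im) (ρ t) (Real.cos θ)
    hxpos hρt hcos hx
  have hπ : (0:ℝ) ≤ 1 / Real.pi := by positivity
  exact mul_le_mul_of_nonneg_left hkey hπ


end
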